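/- Let Ω have finite measure, let u_k ⇀ u* weakly in L²(Ω), and let χ_k → χ strongly in L¹(Ω) where each χ_k and χ are characteristic functions, with (1 - χ_k)·u_k = 0 a.e. for all k. Then (1 - χ)·u* = 0 a.e. on Ω; in particular ‖u*‖₀ ≤ ‖χ‖_{L¹(Ω)}. -/

import Mathlib

open Filter Topology MeasureTheory

/-- If `u_k ⇀ u*` weakly in `L²`, `χ_k → χ` in `L¹` (all characteristic functions),
and `(1 - χ_k)u_k = 0` a.e. for all `k`, then `(1 - χ)u* = 0` a.e.; in particular
`‖u*‖₀ ≤ ‖χ‖_{L¹}`. -/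
theorem weak_limit_support {X : Type*} [MeasurableSpace X]
    (μ : Measure X) [IsFiniteMeasure μ]
    (u : ℕ → X → ℝ) (ustar : X → ℝ) (χk : ℕ → X → ℝ) (χ : X → ℝ)
    (hu : ∀ k, MemLp (u k) 2 μ) (hustar : MemLp ustar 2 μ)
    (hweak : ∀ φ : X → ℝ, MemLp φ 2 μ →
      Tendsto (fun k => ∫ x, u k x * φ x ∂μ) atTop (𝓝 (∫ x, ustar x * φ x ∂μ)))
    (hχk : ∀ k, AEMeasurable (χk k) μ)
    (hχkval : ∀ k, ∀ᵐ x ∂μ, χk k x = 0 ∨ χk k x = 1)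
    (hχ : AEMeasurable χ μ) (hχval : ∀ᵐ x ∂μ, χ x = 0 ∨ χ x = 1)
    (hL1 : Tendsto (fun k => ∫ x, |χk k x - χ x| ∂μ) atTop (𝓝 0))
    (hsupp : ∀ k, ∀ᵐ x ∂μ, (1 - χk k x) * u k x = 0) :
    (∀ᵐ x ∂μ, (1 - χ x) * ustar x = 0) ∧
      (μ {x | ustar x ≠ 0}).toReal ≤ ∫ x, χ x ∂μ := by
  classical
  -- Step 1: uniform bound on ‖u k‖ in L² via Banach–Steinhaus
  set E := Lp ℝ 2 μ with hE
  let U : ℕ → E := fun k => (hu k).toLp (u k)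
  let g : ℕ → E →L[ℝ] ℝ := fun k => innerSL ℝ (U k)
  have hgf : ∀ (k : ℕ) (f : E), g k f = ∫ x, u k x * (f : X → ℝ) x ∂μ := by
    intro k f
    have h1 : g k f = ∫ x, ((U k : X → ℝ) x) * ((f : X → ℝ) x) ∂μ := by
      have := MeasureTheory.L2.inner_def (𝕜 := ℝ) (U k) f
      simpa [g, RCLike.inner_apply, mul_comm] using this
    rw [h1]
    refine integral_congr_ae ?_
    filter_upwards [(hu k).coeFn_toLp] with x hx
    rw [hx]
  have hptwise : ∀ f : E, ∃ C, ∀ k, ‖g k f‖ ≤ C := by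
    intro f
    have hf : MemLp (f : X → ℝ) 2 μ := Lp.memLp f
    have ht : Tendsto (fun k => ‖g k f‖) atTop
        (𝓝 ‖∫ x, ustar x * (f : X → ℝ) x ∂μ‖) := by
      have := (hweak _ hf).norm
      simpa [hgf] using this
    obtain ⟨C, hC⟩ := ht.bddAbove_range
    exact ⟨C, fun k => hC (Set.mem_range_self k)⟩
  obtain ⟨C, hC⟩ := banach_steinhaus hptwise
  have hUnorm : ∀ k, ‖U k‖ ≤ C := by
    intro k
    have := hC k
    rwa [show g k = innerSL ℝ (U k) from rfl, innerSL_apply_norm] at this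
  -- the test function φ = (1-χ) ustar
  set φ : X → ℝ := fun x => (1 - χ x) * ustar x with hφdef
  have hφm : AEStronglyMeasurable φ μ :=
    ((aemeasurable_const.sub hχ).mul hustar.aestronglyMeasurable.aemeasurable).aestronglyMeasurable
  have hφ : MemLp φ 2 μ := by
    refine MemLp.of_le hustar hφm ?_
    filter_upwards [hχval] with x hx
    rcases hx with h | h <;> simp [φ, h, abs_nonneg]
  -- w k = (χk k - χ) * ustar
  set w : ℕ → X → ℝ := fun k x => (χk k x - χ x) * ustar x with hwdef
  have hwm : ∀ k, AEStronglyMeasurable (w k) μ := fun k =>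
    (((hχk k).sub hχ).mul hustar.aestronglyMeasurable.aemeasurable).aestronglyMeasurable
  have hw : ∀ k, MemLp (w k) 2 μ := by
    intro k
    refine MemLp.of_le (hustar.const_mul 2) (hwm k) ?_
    filter_upwards [hχval, hχkval k] with x hx hxk
    have h1 : |χk k x - χ x| ≤ 2 := by
      rcases hx with h | h <;> rcases hxk with h' | h' <;> simp [h, h'] <;> norm_num
    calc ‖w k x‖ = |χk k x - χ x| * |ustar x| := by
          simp [w, abs_mul]
      _ ≤ 2 * |ustar x| := by
          exact mul_le_mul_of_nonneg_right h1 (abs_nonneg _)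
      _ = ‖2 * ustar x‖ := by simp [abs_mul]
  let W : ℕ → E := fun k => (hw k).toLp (w k)
  -- ∫ u k * φ = ⟪U k, W k⟫
  have key : ∀ k, ∫ x, u k x * φ x ∂μ = inner ℝ (U k) (W k) := by
    intro k
    have h1 : ∫ x, u k x * φ x ∂μ = ∫ x, u k x * w k x ∂μ := by
      refine integral_congr_ae ?_
      filter_upwards [hsupp k] with x hx
      have : u k x * ((1 - χ x) * ustar x)
          = (1 - χk k x) * u k x * ustar x + u k x * ((χk k x - χ x) * ustar x) := by ring
      rw [hφdef]; rw [this, hx]; simp only [w]; ring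
    have h2 : (inner ℝ (U k) (W k) : ℝ) = ∫ x, u k x * w k x ∂μ := by
      rw [MeasureTheory.L2.inner_def]
      refine integral_congr_ae ?_
      filter_upwards [(hu k).coeFn_toLp, (hw k).coeFn_toLp] with x hx hxw
      simp [RCLike.inner_apply, U, W, hx, hxw, mul_comm]
    rw [h1, h2]
  -- a k = ∫ |χk - χ| ustar²  and ‖W k‖ = sqrt (a k)
  set a : ℕ → ℝ := fun k => ∫ x, |χk k x - χ x| * (ustar x * ustar x) ∂μ with hadef
  have hWnorm : ∀ k, ‖W k‖ = Real.sqrt (a k) := by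
    intro k
    have h1 : (inner ℝ (W k) (W k) : ℝ) = a k := by
      rw [MeasureTheory.L2.inner_def]
      refine integral_congr_ae ?_
      filter_upwards [(hw k).coeFn_toLp, hχval, hχkval k] with x hx hc hck
      have habs : (χk k x - χ x) * (χk k x - χ x) = |χk k x - χ x| := by
        rcases hc with h | h <;> rcases hck with h' | h' <;> simp [h, h'] <;> norm_num
      simp only [RCLike.inner_apply, starRingEnd_apply, star_trivial, W, hx, w]
      ring_nf
      rw [← habs]
      ring
    have h2 : ‖W k‖^2 = a k := by rw [← real_inner_self_eq_norm_sq]; exact h1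
    rw [← h2, Real.sqrt_sq (norm_nonneg _)]
  -- bound |∫ u k φ| ≤ C * sqrt (a k)
  have hbound : ∀ k, |∫ x, u k x * φ x ∂μ| ≤ C * Real.sqrt (a k) := by
    intro k
    rw [key k]
    calc |(inner ℝ (U k) (W k) : ℝ)| ≤ ‖U k‖ * ‖W k‖ := abs_real_inner_le_norm _ _
      _ ≤ C * ‖W k‖ := mul_le_mul_of_nonneg_right (hUnorm k) (norm_nonneg _)
      _ = C * Real.sqrt (a k) := by rw [hWnorm]
  -- subsequence with a.e. convergence of χk to χ
  have hint : ∀ k, Integrable (fun x => χk k x - χ x) μ := by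
    intro k
    rw [← memLp_one_iff_integrable]
    refine MemLp.of_bound (((hχk k).sub hχ).aestronglyMeasurable) 2 ?_
    filter_upwards [hχval, hχkval k] with x hx hxk
    rcases hx with h | h <;> rcases hxk with h' | h' <;> simp [h, h'] <;> norm_num
  have help : Tendsto (fun k => eLpNorm (fun x => χk k x - χ x) 1 μ) atTop (𝓝 0) := by
    have heq : ∀ k, eLpNorm (fun x => χk k x - χ x) 1 μ
        = ENNReal.ofReal (∫ x, |χk k x - χ x| ∂μ) := by
      intro k
      rw [eLpNorm_one_eq_lintegral_enorm,
        ← ofReal_integral_norm_eq_lintegral_enorm (hint k)]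
      simp [Real.norm_eq_abs]
    simp only [heq]
    have := ENNReal.tendsto_ofReal hL1
    simpa using this
  have hmeas : TendstoInMeasure μ (fun k x => χk k x - χ x) atTop (fun _ => (0:ℝ)) := by
    refine tendstoInMeasure_of_tendsto_eLpNorm_of_ne_top one_ne_zero ENNReal.one_ne_top
      (fun k => (hint k).1) aestronglyMeasurable_const ?_
    have heq2 : (fun n => eLpNorm ((fun x => χk n x - χ x) - fun _ => (0:ℝ)) 1 μ)
        = fun n => eLpNorm (fun x => χk n x - χ x) 1 μ := by
      funext n; congr 1; funext x; simp
    rw [heq2]; exact help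
  obtain ⟨ns, hns, hae⟩ := hmeas.exists_seq_tendsto_ae
  -- along subsequence, a (ns j) → 0 by dominated convergence
  have hsq_int : Integrable (fun x => ustar x * ustar x) μ := by
    have := MeasureTheory.L2.integrable_inner (𝕜 := ℝ) (hustar.toLp ustar) (hustar.toLp ustar)
    refine this.congr ?_
    filter_upwards [hustar.coeFn_toLp] with x hx
    simp [RCLike.inner_apply, hx]; ring
  have ha0 : Tendsto (fun j => a (ns j)) atTop (𝓝 0) := by
    have hDC := tendsto_integral_of_dominated_convergence
      (F := fun j x => |χk (ns j) x - χ x| * (ustar x * ustar x))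
      (f := fun _ => (0:ℝ)) (bound := fun x => 2 * (ustar x * ustar x))
      (fun j => ((((hχk (ns j)).sub hχ).aestronglyMeasurable.norm).mul
        (hustar.aestronglyMeasurable.mul hustar.aestronglyMeasurable)).congr
        (Filter.Eventually.of_forall (fun x => by simp [Real.norm_eq_abs])))
      (hsq_int.const_mul 2)
      (by
        intro j
        filter_upwards [hχval, hχkval (ns j)] with x hx hxk
        have h1 : |χk (ns j) x - χ x| ≤ 2 := by
          rcases hx with h | h <;> rcases hxk with h' | h' <;> simp [h, h'] <;> norm_num
        rw [Real.norm_eq_abs, abs_mul, abs_abs, abs_of_nonneg (mul_self_nonneg (ustar x))]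
        exact mul_le_mul_of_nonneg_right h1 (mul_self_nonneg _))
      (by
        filter_upwards [hae] with x hx
        have h2 : Tendsto (fun j => |χk (ns j) x - χ x|) atTop (𝓝 0) := by
          have := hx.norm
          simpa [Real.norm_eq_abs] using this
        simpa using h2.mul_const (ustar x * ustar x))
    simpa using hDC
  -- conclude ∫ ustar φ = 0
  have hI : Tendsto (fun j => ∫ x, u (ns j) x * φ x ∂μ) atTop (𝓝 (∫ x, ustar x * φ x ∂μ)) :=
    (hweak φ hφ).comp hns.tendsto_atTop
  have hI0 : Tendsto (fun j => ∫ x, u (ns j) x * φ x ∂μ) atTop (𝓝 0) := by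
    have hCs : Tendsto (fun j => C * Real.sqrt (a (ns j))) atTop (𝓝 0) := by
      have := (ha0.sqrt).const_mul C
      simpa using this
    refine squeeze_zero_norm (fun j => ?_) hCs
    simpa [Real.norm_eq_abs] using hbound (ns j)
  have hzero_int : ∫ x, ustar x * φ x ∂μ = 0 := tendsto_nhds_unique hI hI0
  -- integrand nonneg a.e. and integrable ⇒ zero a.e.
  have hnn : 0 ≤ᵐ[μ] fun x => ustar x * φ x := by
    filter_upwards [hχval] with x hx
    rcases hx with h | h
    · have h2 : ustar x * φ x = ustar x * ustar x := by simp [φ, h]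
      simpa [h2] using mul_self_nonneg (ustar x)
    · simp [φ, h]
  have hint2 : Integrable (fun x => ustar x * φ x) μ := by
    have := MeasureTheory.L2.integrable_inner (𝕜 := ℝ) (hustar.toLp ustar) (hφ.toLp φ)
    refine this.congr ?_
    filter_upwards [hustar.coeFn_toLp, hφ.coeFn_toLp] with x hx hxφ
    simp [RCLike.inner_apply, hx, hxφ]; ring
  have hzero_ae : ∀ᵐ x ∂μ, ustar x * φ x = 0 := by
    have := (integral_eq_zero_iff_of_nonneg_ae hnn hint2).mp hzero_int
    filter_upwards [this] with x hx
    exact hx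
  have main : ∀ᵐ x ∂μ, (1 - χ x) * ustar x = 0 := by
    filter_upwards [hzero_ae, hχval] with x hx hc
    rcases hc with h | h
    · have : ustar x * ustar x = 0 := by simpa [φ, h] using hx
      rcases mul_eq_zero.mp this with h' | h' <;> simp [h, h']
    · simp [h]
  refine ⟨main, ?_⟩
  -- second part
  set f := hustar.aestronglyMeasurable.mk ustar with hfdef
  have hfm : StronglyMeasurable f := hustar.aestronglyMeasurable.stronglyMeasurable_mk
  have hfe : ustar =ᵐ[μ] f := hustar.aestronglyMeasurable.ae_eq_mk
  have hB : MeasurableSet {x | f x ≠ 0} := by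
    have : {x | f x ≠ 0} = f ⁻¹' ({0}ᶜ) := rfl
    rw [this]
    exact hfm.measurable (measurableSet_singleton (0:ℝ)).compl
  have hμeq : μ {x | ustar x ≠ 0} = μ {x | f x ≠ 0} := by
    refine measure_congr (Filter.eventuallyEq_set.mpr ?_)
    filter_upwards [hfe] with x hx
    show ustar x ≠ 0 ↔ f x ≠ 0
    rw [hx]
  rw [hμeq]
  have hχint : Integrable χ μ := by
    rw [← memLp_one_iff_integrable]
    refine MemLp.of_bound hχ.aestronglyMeasurable 1 ?_
    filter_upwards [hχval] with x hx
    rcases hx with h | h <;> simp [h]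
  have hind_int : Integrable ({x | f x ≠ 0}.indicator (fun _ => (1:ℝ))) μ :=
    (integrable_const (1:ℝ)).indicator hB
  have hmono : ({x | f x ≠ 0}.indicator (fun _ => (1:ℝ))) ≤ᵐ[μ] χ := by
    filter_upwards [hχval, main, hfe] with x hc hm hx
    by_cases h : f x ≠ 0
    · have hust : ustar x ≠ 0 := by rw [hx]; exact h
      have : 1 - χ x = 0 := by
        rcases mul_eq_zero.mp hm with h' | h'
        · exact h'
        · exact absurd h' hust
      have hχ1 : χ x = 1 := by linarith
      simp [Set.indicator_of_mem, h, hχ1]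
    · push_neg at h
      have : x ∉ {x | f x ≠ 0} := by simp [h]
      rw [Set.indicator_of_notMem this]
      rcases hc with h' | h' <;> simp [h']
  calc (μ {x | f x ≠ 0}).toReal
      = ∫ x, ({x | f x ≠ 0}.indicator (fun _ => (1:ℝ))) x ∂μ := by
        rw [integral_indicator_const (1:ℝ) hB]; simp [Measure.real]
    _ ≤ ∫ x, χ x ∂μ := integral_mono_ae hind_int hχint hmono
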